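/- Let g_L be the left ESFR correction function with parameter η = 0 and degree p ≥ 1. Then for every polynomial φ of degree at most p, ∫_{−1}^{1} g_L'(r) φ(r) dr = −φ(−1). -/

import Mathlib

/-- The degree-`p` Legendre polynomial via the Rodrigues formula. -/
noncomputable def legendre (p : ℕ) (r : ℝ) : ℝ :=
  (1 / ((2:ℝ)^p * (Nat.factorial p))) * iteratedDeriv p (fun x : ℝ => (x^2 - 1)^p) r


/-- Left ESFR correction function with parameter `η`. -/
noncomputable def gL (p : ℕ) (η r : ℝ) : ℝ :=
  ((-1:ℝ)^p / 2) *
    (legendre p r - (η * legendre (p-1) r + legendre (p+1) r) / (1 + η))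

/-- Right ESFR correction function with parameter `η`. -/
noncomputable def gR (p : ℕ) (η r : ℝ) : ℝ :=
  (1/2 : ℝ) *
    (legendre p r + (η * legendre (p-1) r + legendre (p+1) r) / (1 + η))

open Polynomial

/-- iterated derivative of a polynomial function is eval of iterated polynomial derivative -/
lemma iteratedDeriv_eval (Q : ℝ[X]) (k : ℕ) :
    iteratedDeriv k (fun x => Q.eval x) = fun x => (derivative^[k] Q).eval x := by
  induction k with
  | zero => simp
  | succ n ih =>
      rw [iteratedDeriv_succ, ih, Function.iterate_succ_apply']
      funext x
      exact Polynomial.deriv _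

/-- Rodrigues polynomial -/
noncomputable def Leg (n : ℕ) : ℝ[X] :=
  Polynomial.C (1 / ((2:ℝ)^n * (Nat.factorial n))) *
    derivative^[n] ((X^2 - 1 : ℝ[X])^n)

lemma legendre_eq_eval (n : ℕ) (r : ℝ) : legendre n r = (Leg n).eval r := by
  have h : (fun x : ℝ => (x^2 - 1)^n) = fun x => ((X^2 - 1 : ℝ[X])^n).eval x := by
    funext x; simp
  simp [legendre, Leg, h, iteratedDeriv_eval]

lemma integral_eval_derivative (Q : ℝ[X]) (a b : ℝ) :
    ∫ x in a..b, (derivative Q).eval x = Q.eval b - Q.eval a := by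
  apply intervalIntegral.integral_deriv_eq_sub'
  · funext x; exact Polynomial.deriv _
  · intro x _; exact (Q.differentiable).differentiableAt
  · exact ((derivative Q).continuous).continuousOn

/-- integration by parts for polynomials -/
lemma poly_ibp (A B : ℝ[X]) :
    ∫ x in (-1:ℝ)..1, (derivative A).eval x * B.eval x
      = (A*B).eval 1 - (A*B).eval (-1)
        - ∫ x in (-1:ℝ)..1, A.eval x * (derivative B).eval x := by
  have h := integral_eval_derivative (A * B) (-1) 1
  rw [derivative_mul] at h
  have hint1 : IntervalIntegrable (fun x => (derivative A).eval x * B.eval x)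
      MeasureTheory.volume (-1:ℝ) 1 :=
    ((derivative A).continuous.mul B.continuous).intervalIntegrable _ _
  have hint2 : IntervalIntegrable (fun x => A.eval x * (derivative B).eval x)
      MeasureTheory.volume (-1:ℝ) 1 :=
    (A.continuous.mul (derivative B).continuous).intervalIntegrable _ _
  have h2 : (∫ x in (-1:ℝ)..1, (derivative A * B + A * derivative B).eval x)
      = (∫ x in (-1:ℝ)..1, (derivative A).eval x * B.eval x)
        + ∫ x in (-1:ℝ)..1, A.eval x * (derivative B).eval x := by
    rw [← intervalIntegral.integral_add hint1 hint2]
    congr 1; funext x; simp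
  rw [h2] at h
  linarith

lemma deriv_shift (a : ℝ) (m : ℕ) (q : ℝ[X]) :
    derivative ((X - C a)^(m+1) * q)
      = (X - C a)^m * (C (((m+1 : ℕ)):ℝ) * q + (X - C a) * derivative q) := by
  rw [derivative_mul, derivative_pow]
  simp only [derivative_sub, derivative_X, derivative_C, sub_zero, mul_one,
    Nat.add_sub_cancel]
  ring

/-- factorization of iterated derivatives of `(X - a)^p * u` -/
lemma factor_iterate (a : ℝ) (p : ℕ) (u : ℝ[X]) :
    ∀ k, k ≤ p → ∃ q : ℝ[X],
      derivative^[k] ((X - C a)^p * u) = (X - C a)^(p-k) * q ∧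
        q.eval a = (p.descFactorial k : ℝ) * u.eval a := by
  intro k
  induction k with
  | zero => intro _; exact ⟨u, by simp, by simp⟩
  | succ k ih =>
      intro hk
      obtain ⟨q, hq, hqa⟩ := ih (Nat.le_of_succ_le hk)
      have h1 : (p - (k+1)) + 1 = p - k := by omega
      refine ⟨C (((p - (k+1)) + 1 : ℕ) : ℝ) * q + (X - C a) * derivative q, ?_, ?_⟩
      · rw [Function.iterate_succ_apply', hq, ← h1, deriv_shift]
      · have h2 : p.descFactorial (k+1) = (p - k) * p.descFactorial k :=
          Nat.descFactorial_succ p k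
        simp only [eval_add, eval_mul, eval_C, eval_sub, eval_X, sub_self, zero_mul,
          add_zero, hqa, h2, h1]
        push_cast
        ring

lemma iterate_deriv_vanish (a : ℝ) (p k : ℕ) (u : ℝ[X]) (hk : k < p) :
    (derivative^[k] ((X - C a)^p * u)).eval a = 0 := by
  obtain ⟨q, hq, _⟩ := factor_iterate a p u k (le_of_lt hk)
  rw [hq]
  have hne : p - k ≠ 0 := by omega
  simp [zero_pow hne]

lemma iterate_deriv_full (a : ℝ) (p : ℕ) (u : ℝ[X]) :
    (derivative^[p] ((X - C a)^p * u)).eval a = (p.factorial : ℝ) * u.eval a := by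
  obtain ⟨q, hq, hqa⟩ := factor_iterate a p u p le_rfl
  rw [hq]
  simp [hqa, Nat.descFactorial_self]

lemma W_factor_one (n : ℕ) :
    ((X:ℝ[X])^2 - 1)^n = (X - C 1)^n * (X + C 1)^n := by
  rw [← mul_pow]; congr 1
  simp only [map_one]
  ring

lemma W_factor_neg_one (n : ℕ) :
    ((X:ℝ[X])^2 - 1)^n = (X - C (-1))^n * (X - C 1)^n := by
  rw [← mul_pow]; congr 1
  simp only [map_one, map_neg]
  ring

lemma W_vanish (n k : ℕ) (hk : k < n) :
    (derivative^[k] (((X:ℝ[X])^2 - 1)^n)).eval 1 = 0 ∧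
    (derivative^[k] (((X:ℝ[X])^2 - 1)^n)).eval (-1) = 0 := by
  constructor
  · rw [W_factor_one]; exact iterate_deriv_vanish 1 n k _ hk
  · rw [W_factor_neg_one]; exact iterate_deriv_vanish (-1) n k _ hk

lemma W_full_one (n : ℕ) :
    (derivative^[n] (((X:ℝ[X])^2 - 1)^n)).eval 1 = (n.factorial : ℝ) * 2^n := by
  rw [W_factor_one, iterate_deriv_full]
  norm_num

lemma W_full_neg_one (n : ℕ) :
    (derivative^[n] (((X:ℝ[X])^2 - 1)^n)).eval (-1) = (n.factorial : ℝ) * (-2)^n := by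
  rw [W_factor_neg_one, iterate_deriv_full]
  norm_num

lemma Leg_eval_one (n : ℕ) : (Leg n).eval 1 = 1 := by
  have hf : ((n.factorial : ℝ)) ≠ 0 := Nat.cast_ne_zero.2 n.factorial_ne_zero
  have h2 : ((2:ℝ)^n) ≠ 0 := by positivity
  simp only [Leg, eval_mul, eval_C]
  rw [W_full_one]
  field_simp

lemma Leg_eval_neg_one (n : ℕ) : (Leg n).eval (-1) = (-1)^n := by
  have hf : ((n.factorial : ℝ)) ≠ 0 := Nat.cast_ne_zero.2 n.factorial_ne_zero
  have h2 : ((2:ℝ)^n) ≠ 0 := by positivity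
  simp only [Leg, eval_mul, eval_C]
  rw [W_full_neg_one, show ((-2:ℝ))^n = (-1)^n * 2^n by rw [← neg_one_mul, mul_pow]]
  field_simp

/-- orthogonality of the Rodrigues polynomial against lower-degree polynomials -/
lemma rodrigues_orth (n : ℕ) (ψ : ℝ[X]) (hψ : ψ.natDegree < n) :
    ∫ x in (-1:ℝ)..1, (derivative^[n] (((X:ℝ[X])^2 - 1)^n)).eval x * ψ.eval x = 0 := by
  set W : ℝ[X] := ((X:ℝ[X])^2 - 1)^n with hW
  have key : ∀ j, j ≤ n →
      (∫ x in (-1:ℝ)..1, (derivative^[n] W).eval x * ψ.eval x)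
        = (-1:ℝ)^j * ∫ x in (-1:ℝ)..1,
            (derivative^[n-j] W).eval x * (derivative^[j] ψ).eval x := by
    intro j
    induction j with
    | zero => intro _; simp
    | succ j ih =>
        intro hj
        rw [ih (Nat.le_of_succ_le hj)]
        have hnj : n - j = (n - (j+1)) + 1 := by omega
        have hlt : n - (j+1) < n := by omega
        have step : (∫ x in (-1:ℝ)..1,
            (derivative^[n-j] W).eval x * (derivative^[j] ψ).eval x)
            = - ∫ x in (-1:ℝ)..1,
                (derivative^[n-(j+1)] W).eval x * (derivative^[j+1] ψ).eval x := by
          rw [hnj, Function.iterate_succ_apply']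
          rw [poly_ibp (derivative^[n-(j+1)] W) (derivative^[j] ψ)]
          rw [Function.iterate_succ_apply']
          have hv := W_vanish n (n-(j+1)) hlt
          simp [hv.1, hv.2, ← hW]
          rw [hW, hv.1, hv.2]; simp
        rw [step, pow_succ]
        ring
  rw [key n le_rfl]
  rw [Polynomial.iterate_derivative_eq_zero hψ]
  simp

lemma orth_Leg (n : ℕ) (ψ : ℝ[X]) (hψ : ψ.natDegree < n) :
    ∫ x in (-1:ℝ)..1, (Leg n).eval x * ψ.eval x = 0 := by
  simp only [Leg, eval_mul, eval_C, mul_assoc]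
  rw [intervalIntegral.integral_const_mul, rodrigues_orth n ψ hψ, mul_zero]

/-- the gL polynomial -/
noncomputable def GLpoly (p : ℕ) : ℝ[X] :=
  C ((-1:ℝ)^p / 2) * (Leg p - Leg (p+1))

lemma gL_eq_eval (p : ℕ) : gL p 0 = fun r => (GLpoly p).eval r := by
  funext r
  simp [gL, GLpoly, legendre_eq_eval]

lemma GLpoly_eval_one (p : ℕ) : (GLpoly p).eval 1 = 0 := by
  simp [GLpoly, Leg_eval_one]

lemma GLpoly_eval_neg_one (p : ℕ) : (GLpoly p).eval (-1) = 1 := by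
  simp only [GLpoly, eval_mul, eval_C, eval_sub, Leg_eval_neg_one, pow_succ]
  have h : ((-1:ℝ))^p * ((-1:ℝ))^p = 1 := by
    rw [← pow_add, ← two_mul, pow_mul]
    norm_num
  field_simp
  nlinarith [h]

lemma orth_GLpoly (p : ℕ) (ψ : ℝ[X]) (hψ : ψ.natDegree < p) :
    ∫ x in (-1:ℝ)..1, (GLpoly p).eval x * ψ.eval x = 0 := by
  simp only [GLpoly, eval_mul, eval_C, eval_sub, mul_assoc, sub_mul]
  rw [intervalIntegral.integral_const_mul, intervalIntegral.integral_sub (f := fun x => eval x (Leg p) * eval x ψ)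
    (g := fun x => eval x (Leg (p+1)) * eval x ψ)
    (((Leg p).continuous.mul ψ.continuous).intervalIntegrable _ _)
    (((Leg (p+1)).continuous.mul ψ.continuous).intervalIntegrable _ _)]
  rw [orth_Leg p ψ hψ, orth_Leg (p+1) ψ (lt_trans hψ (Nat.lt_succ_self p))]
  simp

theorem gL_DG_lifting (p : ℕ) (hp : 1 ≤ p)
    (φ : Polynomial ℝ) (hφ : φ.degree ≤ (p : ℕ)) :
    ∫ r in (-1:ℝ)..1, deriv (gL p 0) r * φ.eval r = - φ.eval (-1) := by
  have hint : (∫ r in (-1:ℝ)..1, deriv (gL p 0) r * φ.eval r)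
      = ∫ r in (-1:ℝ)..1, (derivative (GLpoly p)).eval r * φ.eval r := by
    congr 1; funext r
    rw [gL_eq_eval, Polynomial.deriv]
  rw [hint, poly_ibp]
  have hdφ : (derivative φ).natDegree < p := by
    by_cases h0 : derivative φ = 0
    · rw [h0]; simpa using (by omega : 0 < p)
    · have hφ0 : φ ≠ 0 := by intro h; rw [h] at h0; simp at h0
      have h1 : (derivative φ).degree < φ.degree := degree_derivative_lt hφ0
      have h2 : (derivative φ).degree < ((p : ℕ) : WithBot ℕ) := lt_of_lt_of_le h1 hφ
      exact (Polynomial.natDegree_lt_iff_degree_lt h0).2 h2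
  rw [orth_GLpoly p (derivative φ) hdφ]
  simp [GLpoly_eval_one, GLpoly_eval_neg_one]
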